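/- Let T be a contractive linear operator on a Banach space X. Define Y = ℓ¹(ℤ; X), let U : Y → Y be the right shift (x_n) ↦ (x_{n-1}), let J : X → Y be the injection into the zeroth coordinate, and let Q : Y → X be defined by Q((x_n)) = Σ_{n≥0} Tⁿ x_n. Then U is an invertible isometry, J and Q are contractive, and Tⁿ = Q Uⁿ J for all n ∈ ℕ₀. -/

import Mathlib

open scoped ENNReal

noncomputable section ShiftDilAux

variable {𝕜 : Type*} [RCLike 𝕜] {X : Type*} [NormedAddCommGroup X] [NormedSpace 𝕜 X]

private lemma memℓ1_iff' (f : ∀ _ : ℤ, X) : Memℓp f 1 ↔ Summable fun n => ‖f n‖ := by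
  rw [memℓp_gen_iff (by norm_num : (0 : ℝ) < (1 : ℝ≥0∞).toReal)]
  simp

private lemma summable_coe' (f : lp (fun _ : ℤ => X) 1) :
    Summable fun n : ℤ => ‖(f : ∀ _ : ℤ, X) n‖ :=
  (memℓ1_iff' _).1 (lp.memℓp f)

private lemma norm1_eq' (f : lp (fun _ : ℤ => X) 1) :
    ‖f‖ = ∑' n : ℤ, ‖(f : ∀ _ : ℤ, X) n‖ := by
  rw [lp.norm_eq_tsum_rpow (by norm_num) f]
  simp

private lemma shift_mem' (f : lp (fun _ : ℤ => X) 1) :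
    Memℓp (fun n : ℤ => (f : ∀ _ : ℤ, X) (n - 1)) 1 := by
  rw [memℓ1_iff']
  exact (summable_coe' f).comp_injective (fun a b h => by omega)

private lemma unshift_mem' (f : lp (fun _ : ℤ => X) 1) :
    Memℓp (fun n : ℤ => (f : ∀ _ : ℤ, X) (n + 1)) 1 := by
  rw [memℓ1_iff']
  exact (summable_coe' f).comp_injective (add_left_injective (1 : ℤ))

/-- The right shift on `ℓ¹(ℤ; X)`. -/
private def shiftU (𝕜 : Type*) [RCLike 𝕜] (X : Type*) [NormedAddCommGroup X]
    [NormedSpace 𝕜 X] : lp (fun _ : ℤ => X) 1 ≃ₗᵢ[𝕜] lp (fun _ : ℤ => X) 1 where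
  toFun f := ⟨fun n => (f : ∀ _ : ℤ, X) (n - 1), shift_mem' f⟩
  invFun f := ⟨fun n => (f : ∀ _ : ℤ, X) (n + 1), unshift_mem' f⟩
  map_add' f g := rfl
  map_smul' c f := rfl
  left_inv f := by ext n; simp
  right_inv f := by ext n; simp
  norm_map' f := by
    rw [norm1_eq', norm1_eq']
    exact (Equiv.subRight (1 : ℤ)).tsum_eq fun n => ‖(f : ∀ _ : ℤ, X) n‖

private lemma norm_pow_le_one' (T : X →L[𝕜] X) (hT : ‖T‖ ≤ 1) (n : ℕ) : ‖T ^ n‖ ≤ 1 := by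
  induction n with
  | zero => rw [pow_zero, ContinuousLinearMap.one_def]; exact ContinuousLinearMap.norm_id_le
  | succ n ih =>
    rw [pow_succ]
    exact le_trans (norm_mul_le _ _)
      (by nlinarith [norm_nonneg (T ^ n), norm_nonneg T])

private lemma norm_apply_le' (T : X →L[𝕜] X) (hT : ‖T‖ ≤ 1) (n : ℕ) (v : X) :
    ‖(T ^ n) v‖ ≤ ‖v‖ := by
  calc ‖(T ^ n) v‖ ≤ ‖T ^ n‖ * ‖v‖ := (T ^ n).le_opNorm _
    _ ≤ 1 * ‖v‖ := by
        have := norm_pow_le_one' T hT n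
        have := norm_nonneg v
        nlinarith
    _ = ‖v‖ := one_mul _

private lemma summable_Qnorm' (T : X →L[𝕜] X) (hT : ‖T‖ ≤ 1) (f : lp (fun _ : ℤ => X) 1) :
    Summable fun n : ℕ => ‖(T ^ n) ((f : ∀ _ : ℤ, X) (n : ℤ))‖ := by
  apply Summable.of_nonneg_of_le (fun n => norm_nonneg _)
    (fun n => norm_apply_le' T hT n _)
  exact (summable_coe' f).comp_injective (fun a b h => Int.ofNat.inj h)

private lemma summable_Q' (T : X →L[𝕜] X) (hT : ‖T‖ ≤ 1) (f : lp (fun _ : ℤ => X) 1)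
    [CompleteSpace X] :
    Summable fun n : ℕ => (T ^ n) ((f : ∀ _ : ℤ, X) (n : ℤ)) :=
  (summable_Qnorm' T hT f).of_norm

/-- `Q f = ∑_{n ≥ 0} Tⁿ f(n)`. -/
private def Qmap (T : X →L[𝕜] X) (hT : ‖T‖ ≤ 1) [CompleteSpace X] :
    lp (fun _ : ℤ => X) 1 →L[𝕜] X :=
  LinearMap.mkContinuous
    { toFun := fun f => ∑' n : ℕ, (T ^ n) ((f : ∀ _ : ℤ, X) (n : ℤ))
      map_add' := fun f g => by
        simp only [lp.coeFn_add, Pi.add_apply, map_add]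
        exact Summable.tsum_add (summable_Q' T hT f) (summable_Q' T hT g)
      map_smul' := fun c f => by
        simp only [lp.coeFn_smul, Pi.smul_apply, map_smul, RingHom.id_apply]
        exact Summable.tsum_const_smul c (summable_Q' T hT f) }
    1
    (fun f => by
      rw [one_mul]
      calc ‖∑' n : ℕ, (T ^ n) ((f : ∀ _ : ℤ, X) (n : ℤ))‖
          ≤ ∑' n : ℕ, ‖(T ^ n) ((f : ∀ _ : ℤ, X) (n : ℤ))‖ :=
            norm_tsum_le_tsum_norm (summable_Qnorm' T hT f)
        _ ≤ ∑' n : ℕ, ‖(f : ∀ _ : ℤ, X) (n : ℤ)‖ :=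
            Summable.tsum_le_tsum (fun n => norm_apply_le' T hT n _) (summable_Qnorm' T hT f)
              ((summable_coe' f).comp_injective (fun a b h => Int.ofNat.inj h))
        _ ≤ ∑' n : ℤ, ‖(f : ∀ _ : ℤ, X) n‖ :=
            Summable.tsum_le_tsum_of_inj (fun n : ℕ => (n : ℤ)) (fun a b h => Int.ofNat.inj h)
              (fun _ _ => norm_nonneg _) (fun n => le_rfl)
              ((summable_coe' f).comp_injective (fun a b h => Int.ofNat.inj h))
              (summable_coe' f)
        _ = ‖f‖ := (norm1_eq' f).symm)

/-- `J` injects into the zeroth coordinate. -/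
private def Jmap (𝕜 : Type*) [RCLike 𝕜] (X : Type*) [NormedAddCommGroup X]
    [NormedSpace 𝕜 X] : X →L[𝕜] lp (fun _ : ℤ => X) 1 :=
  LinearMap.mkContinuous
    { toFun := fun x => lp.single 1 (0 : ℤ) x
      map_add' := fun x y => by
        ext n
        by_cases h : n = (0 : ℤ)
        · subst h
          simp [lp.single_apply_self]
        · simp [lp.single_apply_ne 1 (0 : ℤ) _ h]
      map_smul' := fun c x => by simpa using lp.single_smul 1 (0 : ℤ) x c }
    1
    (fun x => by
      rw [one_mul]
      exact le_of_eq (lp.norm_single (E := fun _ : ℤ => X) (by norm_num) 0 x))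

end ShiftDilAux

/-- For a contraction `T` on a Banach space `X`, on `Y = ℓ¹(ℤ; X)` the
right shift `U`, the injection `J` into the zeroth coordinate, and
`Q((xₙ)) = ∑_{n ≥ 0} Tⁿ xₙ` give an invertible isometry `U`, contractions `J` and `Q`,
and `Tⁿ = Q Uⁿ J` for all `n ∈ ℕ₀`. -/
theorem shift_dilation_on_l1 (𝕜 : Type*) [RCLike 𝕜] (X : Type*) [NormedAddCommGroup X]
    [NormedSpace 𝕜 X] [CompleteSpace X] (T : X →L[𝕜] X) (hT : ‖T‖ ≤ 1) :
    ∃ (U : lp (fun _ : ℤ => X) 1 ≃ₗᵢ[𝕜] lp (fun _ : ℤ => X) 1)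
      (J : X →L[𝕜] lp (fun _ : ℤ => X) 1) (Q : lp (fun _ : ℤ => X) 1 →L[𝕜] X),
      (∀ (f : lp (fun _ : ℤ => X) 1) (n : ℤ), (U f : ∀ _ : ℤ, X) n = (f : ∀ _ : ℤ, X) (n - 1)) ∧
      (∀ (x : X) (n : ℤ), (J x : ∀ _ : ℤ, X) n = if n = 0 then x else 0) ∧
      (∀ f : lp (fun _ : ℤ => X) 1, Q f = ∑' n : ℕ, (T ^ n) ((f : ∀ _ : ℤ, X) (n : ℤ))) ∧
      ‖J‖ ≤ 1 ∧ ‖Q‖ ≤ 1 ∧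
      (∀ (n : ℕ) (x : X), (T ^ n) x = Q ((⇑U)^[n] (J x))) := by
  refine ⟨shiftU 𝕜 X, Jmap 𝕜 X, Qmap T hT, ?_, ?_, ?_, ?_, ?_, ?_⟩
  · intro f n; rfl
  · intro x n
    by_cases h : n = (0 : ℤ)
    · subst h
      simp [Jmap, lp.single_apply_self]
    · simp [Jmap, lp.single_apply_ne 1 (0 : ℤ) _ h, h]
  · intro f; rfl
  · exact LinearMap.mkContinuous_norm_le _ zero_le_one _
  · exact LinearMap.mkContinuous_norm_le _ zero_le_one _
  · intro n x
    have hU : ∀ (f : lp (fun _ : ℤ => X) 1) (m : ℤ),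
        ((shiftU 𝕜 X) f : ∀ _ : ℤ, X) m = (f : ∀ _ : ℤ, X) (m - 1) := fun f m => rfl
    have hiter : ∀ (k : ℕ) (f : lp (fun _ : ℤ => X) 1) (m : ℤ),
        ((⇑(shiftU 𝕜 X))^[k] f : ∀ _ : ℤ, X) m = (f : ∀ _ : ℤ, X) (m - k) := by
      intro k
      induction k with
      | zero => intro f m; simp
      | succ k ih =>
        intro f m
        rw [Function.iterate_succ_apply', hU, ih]
        congr 1
        push_cast
        ring
    have hJ : ∀ (m : ℤ), ((Jmap 𝕜 X) x : ∀ _ : ℤ, X) m = if m = 0 then x else 0 := by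
      intro m
      by_cases h : m = (0 : ℤ)
      · subst h; simp [Jmap, lp.single_apply_self]
      · simp [Jmap, lp.single_apply_ne 1 (0 : ℤ) _ h, h]
    have hcoord : ∀ k : ℕ,
        (((⇑(shiftU 𝕜 X))^[n] ((Jmap 𝕜 X) x)) : ∀ _ : ℤ, X) (k : ℤ)
          = if k = n then x else 0 := by
      intro k
      rw [hiter, hJ]
      by_cases h : k = n
      · subst h; simp
      · rw [if_neg h, if_neg]
        intro hc
        exact h (by omega)
    show (T ^ n) x = ∑' k : ℕ, (T ^ k) ((((⇑(shiftU 𝕜 X))^[n] ((Jmap 𝕜 X) x)) : ∀ _ : ℤ, X) (k : ℤ))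
    rw [tsum_eq_single n]
    · rw [hcoord n, if_pos rfl]
    · intro k hk
      rw [hcoord k, if_neg hk, map_zero]
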